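/- Consider full binary trees with n ≥ 2 labeled leaves 1,…,n. Model the greedy top-down parser as follows: given a uniformly random permutation s of {1,…,n} (the scores), the parser recursively splits each span [i,j] with j−i ≥ 1 at the position k of the maximum score in [i,j]: if k = i it produces children [i,i] and [i+1,j]; if k = j it produces [i,j−1] and [j,j]; otherwise it produces [i,k−1] and [k,j]. Then for every length ℓ with 1 < ℓ < n, the probability that the rightmost span [n−ℓ+1, n] is a constituent of the resulting tree equals twice the probability that the leftmost span [1, ℓ] is a constituent. -/

import Mathlib

inductive Constituent (s : ℕ → ℝ) (n : ℕ) : ℕ → ℕ → Prop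
  | root : Constituent s n 1 n
  | leftChild (i j k : ℕ) :
      Constituent s n i j → i < j → k ∈ Finset.Icc i j →
      (∀ l ∈ Finset.Icc i j, l ≠ k → s l < s k) →
      Constituent s n i (if k = i then i else if k = j then j - 1 else k - 1)
  | rightChild (i j k : ℕ) :
      Constituent s n i j → i < j → k ∈ Finset.Icc i j →
      (∀ l ∈ Finset.Icc i j, l ≠ k → s l < s k) →
      Constituent s n (if k = i then i + 1 else if k = j then j else k) j

noncomputable def scoreOf {n : ℕ} (σ : Equiv.Perm (Fin n)) : ℕ → ℝ :=
  fun i => if h : i - 1 < n then ((σ ⟨i - 1, h⟩ : Fin n) : ℝ) else 0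

section Struct
variable {s : ℕ → ℝ} {n : ℕ}

lemma constituent_bounds (hn : 1 ≤ n) {i j : ℕ} (h : Constituent s n i j) :
    1 ≤ i ∧ i ≤ j ∧ j ≤ n := by
  induction h with
  | root => omega
  | leftChild i j k h hij hk hmax ih =>
      simp only [Finset.mem_Icc] at hk
      split_ifs <;> omega
  | rightChild i j k h hij hk hmax ih =>
      simp only [Finset.mem_Icc] at hk
      split_ifs <;> omega

lemma left_forward (hn : 1 ≤ n) {i m : ℕ} (h : Constituent s n i m) :
    i = 1 → 2 ≤ m → m < n → ∀ t ∈ Finset.Icc 1 m, s t < s (m + 1) := by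
  induction h with
  | root => intro _ _ hc; exact absurd hc (lt_irrefl _)
  | leftChild i j k h hij hk hmax ih =>
      intro hi hm hmn t ht
      subst hi
      simp only [Finset.mem_Icc] at hk ht
      by_cases h1 : k = 1
      · rw [if_pos h1] at hm; omega
      · rw [if_neg h1] at hm hmn ht ⊢
        by_cases h2 : k = j
        · rw [if_pos h2] at hm hmn ht ⊢
          have hj1 : j - 1 + 1 = j := by omega
          rw [hj1]
          have := hmax t (by simp only [Finset.mem_Icc]; omega) (by omega)
          rwa [h2] at this
        · rw [if_neg h2] at hm hmn ht ⊢
          have hk1 : k - 1 + 1 = k := by omega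
          rw [hk1]
          exact hmax t (by simp only [Finset.mem_Icc]; omega) (by omega)
  | rightChild i j k h hij hk hmax ih =>
      intro hi hm hmn
      exfalso
      have hb := constituent_bounds hn h
      simp only [Finset.mem_Icc] at hk
      split_ifs at hi <;> omega

lemma right_forward (hn : 1 ≤ n) {i j : ℕ} (h : Constituent s n i j) :
    j = n → 2 ≤ i → i ≤ n - 1 →
    (∀ t ∈ Finset.Icc i n, t ≠ i → s t < s i) ∨
    (∀ t ∈ Finset.Icc (i - 1) n, t ≠ i - 1 → s t < s (i - 1)) := by
  induction h with
  | root => intro _ h2 _; omega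
  | leftChild i j k h hij hk hmax ih =>
      intro hE hi2 hi1
      exfalso
      have hb := constituent_bounds hn h
      simp only [Finset.mem_Icc] at hk
      split_ifs at hE <;> omega
  | rightChild i j k h hij hk hmax ih =>
      intro hjn hi2 hi1
      subst hjn
      simp only [Finset.mem_Icc] at hk
      split_ifs at hi2 hi1 ⊢ with h1 h2
      · right
        rw [Nat.add_sub_cancel]
        intro t ht htne
        subst h1
        exact hmax t ht htne
      · omega
      · left
        intro t ht htne
        simp only [Finset.mem_Icc] at ht
        exact hmax t (by simp only [Finset.mem_Icc]; omega) htne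

lemma exists_strict_max (hinj : Set.InjOn s (Finset.Icc 1 n : Finset ℕ))
    {a b : ℕ} (ha : 1 ≤ a) (hab : a ≤ b) (hbn : b ≤ n) :
    ∃ k ∈ Finset.Icc a b, ∀ l ∈ Finset.Icc a b, l ≠ k → s l < s k := by
  obtain ⟨k, hk, hmax⟩ := Finset.exists_max_image (Finset.Icc a b) s
    ⟨a, by simp only [Finset.mem_Icc]; omega⟩
  refine ⟨k, hk, fun l hl hlk => lt_of_le_of_ne (hmax l hl) fun he => hlk ?_⟩
  simp only [Finset.mem_Icc] at hk hl
  exact hinj (by simp only [Finset.coe_Icc, Set.mem_Icc]; omega)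
    (by simp only [Finset.coe_Icc, Set.mem_Icc]; omega) he

lemma left_backward (hinj : Set.InjOn s (Finset.Icc 1 n : Finset ℕ)) {ℓ : ℕ}
    (hℓ : 2 ≤ ℓ) (hrec : ∀ t ∈ Finset.Icc 1 ℓ, s t < s (ℓ + 1)) :
    ∀ m, ℓ ≤ m → m ≤ n → Constituent s n 1 m → Constituent s n 1 ℓ := by
  intro m
  induction m using Nat.strong_induction_on with
  | _ m ih =>
    intro hℓm hmn hc
    rcases eq_or_lt_of_le hℓm with h | h
    · exact h ▸ hc
    · obtain ⟨k, hkmem, hkmax⟩ := exists_strict_max hinj (le_refl 1) (by omega) hmn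
      have hkb : 1 ≤ k ∧ k ≤ m := by simpa only [Finset.mem_Icc] using hkmem
      have hkℓ : ℓ + 1 ≤ k := by
        by_contra hcon
        push_neg at hcon
        have h1 : s (ℓ + 1) < s k :=
          hkmax (ℓ + 1) (by simp only [Finset.mem_Icc]; omega) (by omega)
        have h2 : s k < s (ℓ + 1) := hrec k (by simp only [Finset.mem_Icc]; omega)
        linarith
      have hchild := Constituent.leftChild 1 m k hc (by omega) hkmem hkmax
      have hE : (if k = 1 then 1 else if k = m then m - 1 else k - 1) = k - 1 := by
        split_ifs <;> omega
      rw [hE] at hchild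
      rcases eq_or_lt_of_le (show ℓ ≤ k - 1 by omega) with he | hlt
      · exact he ▸ hchild
      · exact ih (k - 1) (by omega) (by omega) (by omega) hchild

lemma right_chain (hinj : Set.InjOn s (Finset.Icc 1 n : Finset ℕ)) {r : ℕ}
    (hr1 : 1 ≤ r) (hrn : r < n)
    (hrec : ∀ t ∈ Finset.Icc r n, t ≠ r → s t < s r) :
    ∀ d i, r - i ≤ d → 1 ≤ i → i ≤ r → Constituent s n i n → Constituent s n r n := by
  intro d
  induction d with
  | zero =>
      intro i hd h1 h2 hc
      have : i = r := by omega
      exact this ▸ hc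
  | succ d ih =>
      intro i hd h1 h2 hc
      rcases eq_or_lt_of_le h2 with he | hlt
      · exact he ▸ hc
      · obtain ⟨k, hkmem, hkmax⟩ := exists_strict_max hinj h1 (by omega) (le_refl n)
        have hkb : i ≤ k ∧ k ≤ n := by simpa only [Finset.mem_Icc] using hkmem
        have hkr : k ≤ r := by
          by_contra hcon
          push_neg at hcon
          have h3 : s k < s r := hrec k (by simp only [Finset.mem_Icc]; omega) (by omega)
          have h4 : s r < s k := hkmax r (by simp only [Finset.mem_Icc]; omega) (by omega)
          linarith
        have hchild := Constituent.rightChild i n k hc (by omega) hkmem hkmax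
        by_cases hki : k = i
        · rw [if_pos hki] at hchild
          exact ih (i + 1) (by omega) (by omega) (by omega) hchild
        · rw [if_neg hki, if_neg (by omega : ¬ k = n)] at hchild
          exact ih k (by omega) (by omega) (by omega) hchild

lemma right_backward (hinj : Set.InjOn s (Finset.Icc 1 n : Finset ℕ)) {m : ℕ}
    (hm2 : 2 ≤ m) (hm1 : m ≤ n - 1) (hn : 2 ≤ n)
    (h : (∀ t ∈ Finset.Icc m n, t ≠ m → s t < s m) ∨
         (∀ t ∈ Finset.Icc (m - 1) n, t ≠ m - 1 → s t < s (m - 1))) :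
    Constituent s n m n := by
  rcases h with h | h
  · exact right_chain hinj (by omega) (by omega) h m 1 (by omega) (by omega) (by omega)
      Constituent.root
  · have hc : Constituent s n (m - 1) n :=
      right_chain hinj (by omega) (by omega) h (m - 1) 1 (by omega) (by omega) (by omega)
        Constituent.root
    have hchild := Constituent.rightChild (m - 1) n (m - 1) hc (by omega)
      (by simp only [Finset.mem_Icc]; omega) h
    rw [if_pos rfl] at hchild
    have : m - 1 + 1 = m := by omega
    rwa [this] at hchild

end Struct

section Count
open Finset
variable {n : ℕ}

private def cls (S : Finset (Fin n)) (a : Fin n) : Finset (Equiv.Perm (Fin n)) :=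
  univ.filter fun σ => ∀ x ∈ S, x ≠ a → σ x < σ a

lemma mem_cls {S : Finset (Fin n)} {a : Fin n} {σ : Equiv.Perm (Fin n)} :
    σ ∈ cls S a ↔ ∀ x ∈ S, x ≠ a → σ x < σ a := by
  simp [cls]

lemma swap_mem_cls {S : Finset (Fin n)} {a b : Fin n} (ha : a ∈ S) (hb : b ∈ S) (hab : a ≠ b)
    {σ : Equiv.Perm (Fin n)} (h : σ ∈ cls S a) : σ * Equiv.swap a b ∈ cls S b := by
  rw [mem_cls] at h ⊢
  intro x hx hxb
  simp only [Equiv.Perm.mul_apply]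
  rw [Equiv.swap_apply_right]
  rcases eq_or_ne x a with rfl | hxa
  · rw [Equiv.swap_apply_left]
    exact h b hb hab.symm
  · rw [Equiv.swap_apply_of_ne_of_ne hxa hxb]
    exact h x hx hxa

lemma cls_card_eq {S : Finset (Fin n)} {a b : Fin n} (ha : a ∈ S) (hb : b ∈ S) :
    (cls S a).card = (cls S b).card := by
  rcases eq_or_ne a b with rfl | hab
  · rfl
  · refine Finset.card_bij' (fun σ _ => σ * Equiv.swap a b) (fun σ _ => σ * Equiv.swap a b)
      (fun σ hσ => swap_mem_cls ha hb hab hσ)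
      (fun σ hσ => by
        rw [Equiv.swap_comm]
        exact swap_mem_cls hb ha hab.symm hσ)
      (fun σ _ => by rw [mul_assoc, Equiv.swap_mul_self, mul_one])
      (fun σ _ => by rw [mul_assoc, Equiv.swap_mul_self, mul_one])

lemma cls_disjoint {S : Finset (Fin n)} {a b : Fin n} (ha : a ∈ S) (hb : b ∈ S) (hab : a ≠ b) :
    Disjoint (cls S a) (cls S b) := by
  rw [Finset.disjoint_left]
  intro σ hσa hσb
  rw [mem_cls] at hσa hσb
  exact absurd (hσa b hb hab.symm) (not_lt.mpr (le_of_lt (hσb a ha hab)))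

lemma sum_cls {S : Finset (Fin n)} (hS : S.Nonempty) :
    ∑ a ∈ S, (cls S a).card = (univ : Finset (Equiv.Perm (Fin n))).card := by
  rw [← Finset.card_biUnion (fun a ha b hb hab => cls_disjoint ha hb hab)]
  congr 1
  apply Finset.Subset.antisymm (fun σ _ => mem_univ σ)
  intro σ _
  obtain ⟨a, haS, hmax⟩ := Finset.exists_max_image S (⇑σ) hS
  refine Finset.mem_biUnion.mpr ⟨a, haS, mem_cls.mpr fun x hx hxa => ?_⟩
  exact lt_of_le_of_ne (hmax x hx) fun he => hxa (σ.injective he)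

lemma cls_card_mul {S : Finset (Fin n)} {a : Fin n} (ha : a ∈ S) :
    (cls S a).card * S.card = (univ : Finset (Equiv.Perm (Fin n))).card := by
  have h := sum_cls (n := n) ⟨a, ha⟩
  rw [Finset.sum_congr rfl (fun b hb => cls_card_eq hb ha)] at h
  rw [Finset.sum_const, smul_eq_mul, mul_comm] at h
  exact h

end Count

section Trans
open Finset
variable {n : ℕ} (σ : Equiv.Perm (Fin n))

lemma scoreOf_lt {a b : ℕ} (ha : a - 1 < n) (hb : b - 1 < n) :
    scoreOf σ a < scoreOf σ b ↔ σ ⟨a - 1, ha⟩ < σ ⟨b - 1, hb⟩ := by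
  simp only [scoreOf, dif_pos ha, dif_pos hb, Nat.cast_lt, Fin.lt_def]

lemma scoreOf_injOn : Set.InjOn (scoreOf σ) (Finset.Icc 1 n : Finset ℕ) := by
  intro a ha b hb he
  simp only [Finset.coe_Icc, Set.mem_Icc] at ha hb
  have ha' : a - 1 < n := by omega
  have hb' : b - 1 < n := by omega
  simp only [scoreOf, dif_pos ha', dif_pos hb', Nat.cast_inj] at he
  have h2 : (⟨a - 1, ha'⟩ : Fin n) = ⟨b - 1, hb'⟩ := σ.injective (Fin.ext he)
  have := Fin.mk.injEq .. ▸ h2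
  omega

lemma transL {ℓ : ℕ} (hℓ : 1 ≤ ℓ) (hℓn : ℓ < n) :
    (∀ t ∈ Finset.Icc 1 ℓ, scoreOf σ t < scoreOf σ (ℓ + 1)) ↔
      σ ∈ cls (Iic (⟨ℓ, hℓn⟩ : Fin n)) ⟨ℓ, hℓn⟩ := by
  rw [mem_cls]
  constructor
  · intro h x hx hxa
    rw [Finset.mem_Iic, Fin.le_def] at hx
    have hxv : (x : ℕ) < ℓ := by
      rcases eq_or_lt_of_le hx with he | h'
      · exact absurd (Fin.ext he) hxa
      · exact h'
    have := h ((x : ℕ) + 1) (by simp only [Finset.mem_Icc]; omega)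
    rw [scoreOf_lt σ (show (x : ℕ) + 1 - 1 < n by omega) (show ℓ + 1 - 1 < n by omega)] at this
    have e1 : (⟨(x : ℕ) + 1 - 1, by omega⟩ : Fin n) = x := Fin.ext (by simp)
    have e2 : (⟨ℓ + 1 - 1, by omega⟩ : Fin n) = ⟨ℓ, hℓn⟩ := Fin.ext (by simp)
    rwa [e1, e2] at this
  · intro h t ht
    rw [Finset.mem_Icc] at ht
    have h1 : t - 1 < n := by omega
    rw [scoreOf_lt σ h1 (show ℓ + 1 - 1 < n by omega)]
    have e2 : (⟨ℓ + 1 - 1, by omega⟩ : Fin n) = ⟨ℓ, hℓn⟩ := Fin.ext (by simp)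
    rw [e2]
    exact h ⟨t - 1, h1⟩ (by rw [Finset.mem_Iic, Fin.le_def]; simp; omega)
      (by simp only [ne_eq, Fin.mk.injEq]; omega)

lemma transR {r : ℕ} (hr1 : 1 ≤ r) (hrn : r ≤ n) (hr' : r - 1 < n) :
    (∀ t ∈ Finset.Icc r n, t ≠ r → scoreOf σ t < scoreOf σ r) ↔
      σ ∈ cls (Ici (⟨r - 1, hr'⟩ : Fin n)) ⟨r - 1, hr'⟩ := by
  rw [mem_cls]
  constructor
  · intro h x hx hxa
    rw [Finset.mem_Ici, Fin.le_def] at hx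
    have hxv : r - 1 < (x : ℕ) := by
      rcases eq_or_lt_of_le hx with he | h'
      · exact absurd (Fin.ext he.symm) hxa
      · exact h'
    have := h ((x : ℕ) + 1) (by simp only [Finset.mem_Icc]; omega) (by omega)
    rw [scoreOf_lt σ (show (x : ℕ) + 1 - 1 < n by omega) hr'] at this
    have e1 : (⟨(x : ℕ) + 1 - 1, by omega⟩ : Fin n) = x := Fin.ext (by simp)
    rwa [e1] at this
  · intro h t ht htr
    rw [Finset.mem_Icc] at ht
    have h1 : t - 1 < n := by omega
    rw [scoreOf_lt σ h1 hr']
    exact h ⟨t - 1, h1⟩ (by rw [Finset.mem_Ici, Fin.le_def]; simp; omega)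
      (by simp only [ne_eq, Fin.mk.injEq]; omega)

end Trans

open Finset in
theorem stmt_9 (n ℓ : ℕ) (hn : 2 ≤ n) (hℓ1 : 1 < ℓ) (hℓn : ℓ < n) :
    Nat.card {σ : Equiv.Perm (Fin n) // Constituent (scoreOf σ) n (n - ℓ + 1) n} =
      2 * Nat.card {σ : Equiv.Perm (Fin n) // Constituent (scoreOf σ) n 1 ℓ} := by
  classical
  have hn1 : 1 ≤ n := by omega
  set m : ℕ := n - ℓ + 1 with hm
  have hm2 : 2 ≤ m := by omega
  have hm1 : m ≤ n - 1 := by omega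
  have haL : ℓ < n := hℓn
  have haR1 : n - ℓ - 1 < n := by omega
  have haR2 : n - ℓ < n := by omega
  set aL : Fin n := ⟨ℓ, haL⟩ with haLdef
  set aR1 : Fin n := ⟨n - ℓ - 1, haR1⟩ with haR1def
  set aR2 : Fin n := ⟨n - ℓ, haR2⟩ with haR2def
  -- characterization of the left event
  have key1 : ∀ σ : Equiv.Perm (Fin n),
      Constituent (scoreOf σ) n 1 ℓ ↔ σ ∈ cls (Iic aL) aL := by
    intro σ
    rw [← transL σ (by omega) haL]
    constructor
    · intro h
      exact left_forward hn1 h rfl (by omega) hℓn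
    · intro h
      exact left_backward (scoreOf_injOn σ) (by omega) h n (by omega) (le_refl n)
        Constituent.root
  -- characterization of the right event
  have keyS : ∀ σ : Equiv.Perm (Fin n),
      (σ ∈ cls (Ici aR1) aR1 ∨ σ ∈ cls (Ici aR2) aR2) ↔
      (σ ∈ cls (Ici aR1) aR1 ∨ σ ∈ cls (Ici aR1) aR2) := by
    intro σ
    constructor
    · rintro (h | h)
      · exact Or.inl h
      · rw [mem_cls] at h
        rcases lt_trichotomy (σ aR1) (σ aR2) with hlt | heq | hgt
        · refine Or.inr (mem_cls.mpr fun x hx hxa => ?_)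
          rcases eq_or_ne x aR1 with rfl | hxr
          · exact hlt
          · refine h x ?_ hxa
            rw [Finset.mem_Ici, Fin.le_def] at hx ⊢
            have : (x : ℕ) ≠ n - ℓ - 1 := fun hc => hxr (Fin.ext hc)
            simp only [haR1def] at hx this
            simp only [haR2def]
            omega
        · exact absurd (σ.injective heq) (by simp [haR1def, haR2def, Fin.ext_iff]; omega)
        · refine Or.inl (mem_cls.mpr fun x hx hxa => ?_)
          rcases eq_or_ne x aR2 with rfl | hxr
          · exact hgt
          · refine lt_trans (h x ?_ hxr) hgt
            rw [Finset.mem_Ici, Fin.le_def] at hx ⊢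
            have : (x : ℕ) ≠ n - ℓ - 1 := fun hc => hxa (Fin.ext hc)
            simp only [haR1def] at hx this
            simp only [haR2def]
            omega
    · rintro (h | h)
      · exact Or.inl h
      · refine Or.inr (mem_cls.mpr fun x hx hxa => ?_)
        refine mem_cls.mp h x ?_ hxa
        rw [Finset.mem_Ici, Fin.le_def] at hx ⊢
        simp only [haR1def, haR2def] at hx ⊢
        omega
  have key2 : ∀ σ : Equiv.Perm (Fin n),
      Constituent (scoreOf σ) n m n ↔
        (σ ∈ cls (Ici aR1) aR1 ∨ σ ∈ cls (Ici aR1) aR2) := by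
    intro σ
    rw [← keyS σ]
    have e1 : m - 1 - 1 = n - ℓ - 1 := by omega
    have e2 : m - 1 = n - ℓ := by omega
    have hp2 : m - 1 < n := by omega
    have hp1 : m - 1 - 1 < n := by omega
    have eq2 : (⟨m - 1, hp2⟩ : Fin n) = aR2 := Fin.ext e2
    have eq1 : (⟨m - 1 - 1, hp1⟩ : Fin n) = aR1 := Fin.ext e1
    constructor
    · intro h
      have hfwd := right_forward hn1 h rfl hm2 hm1
      rcases hfwd with hfwd | hfwd
      · right
        have hmem := (transR σ (show 1 ≤ m by omega) (show m ≤ n by omega) hp2).mp hfwd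
        rwa [eq2] at hmem
      · left
        have hmem := (transR σ (show 1 ≤ m - 1 by omega) (show m - 1 ≤ n by omega) hp1).mp hfwd
        rwa [eq1] at hmem
    · intro h
      apply right_backward (scoreOf_injOn σ) hm2 hm1 hn
      rcases h with h | h
      · right
        rw [← eq1] at h
        exact (transR σ (show 1 ≤ m - 1 by omega) (show m - 1 ≤ n by omega) hp1).mpr h
      · left
        rw [← eq2] at h
        exact (transR σ (show 1 ≤ m by omega) (show m ≤ n by omega) hp2).mpr h
  -- counting
  have hdisj : Disjoint (cls (Ici aR1) aR1) (cls (Ici aR1) aR2) :=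
    cls_disjoint (Finset.mem_Ici.mpr le_rfl)
      (Finset.mem_Ici.mpr (by rw [Fin.le_def]; simp only [haR1def, haR2def]; omega))
      (by simp only [haR1def, haR2def, ne_eq, Fin.mk.injEq]; omega)
  have cardIic : (Iic aL).card = ℓ + 1 := by rw [Fin.card_Iic]
  have cardIci : (Ici aR1).card = ℓ + 1 := by rw [Fin.card_Ici]; simp [haR1def]; omega
  have hL : (cls (Iic aL) aL).card * (ℓ + 1) =
      (univ : Finset (Equiv.Perm (Fin n))).card := by
    rw [← cardIic]; exact cls_card_mul (Finset.mem_Iic.mpr le_rfl)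
  have hRa : (cls (Ici aR1) aR1).card * (ℓ + 1) =
      (univ : Finset (Equiv.Perm (Fin n))).card := by
    rw [← cardIci]; exact cls_card_mul (Finset.mem_Ici.mpr le_rfl)
  have hRb : (cls (Ici aR1) aR2).card * (ℓ + 1) =
      (univ : Finset (Equiv.Perm (Fin n))).card := by
    rw [← cardIci]
    exact cls_card_mul (Finset.mem_Ici.mpr (by rw [Fin.le_def]; simp only [haR1def, haR2def]; omega))
  -- convert Nat.card to Finset.card
  have cardR : Nat.card {σ : Equiv.Perm (Fin n) // Constituent (scoreOf σ) n (n - ℓ + 1) n} =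
      (cls (Ici aR1) aR1 ∪ cls (Ici aR1) aR2).card := by
    rw [Nat.card_congr (Equiv.subtypeEquivRight (fun σ =>
      (key2 σ).trans Finset.mem_union.symm)), Nat.card_eq_fintype_card, Fintype.card_coe]
  have cardL : Nat.card {σ : Equiv.Perm (Fin n) // Constituent (scoreOf σ) n 1 ℓ} =
      (cls (Iic aL) aL).card := by
    rw [Nat.card_congr (Equiv.subtypeEquivRight key1), Nat.card_eq_fintype_card,
      Fintype.card_coe]
  rw [cardR, cardL, Finset.card_union_of_disjoint hdisj]
  have hfinal : ((cls (Ici aR1) aR1).card + (cls (Ici aR1) aR2).card) * (ℓ + 1) =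
      (2 * (cls (Iic aL) aL).card) * (ℓ + 1) := by
    rw [add_mul, hRa, hRb, mul_assoc, hL]
    omega
  exact Nat.eq_of_mul_eq_mul_right (by omega) hfinal
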